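/- Let (a_n) be a sequence in {|z| > 1} with |a_n| ≤ |a_{n+1}|, a_n → ∞, and |a_{n+N}| ≥ K|a_n| for some K > 1, N ∈ ℕ. Then for every r > 1 and every z with r/K < |z| ≤ Kr: (i) |∑_{|a_j| > K²r} z/(z − a_j)| ≤ ∑_{n=1}^∞ 4N/(K^{4n−3} − 1), and (ii) |∑_{|a_j| ≤ K^{−2}r} z/(z − a_j) − n(K^{−2}r)| ≤ ∑_{n=1}^∞ 4N/(K^{4n−3} − 1), where n(s) denotes the number of indices j with |a_j| ≤ s. -/

import Mathlib

set_option maxHeartbeats 1000000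

open Filter Finset

/-- Estimates for the logarithmic derivative sums of a canonical product whose
zeros satisfy `|a_{n+N}| ≥ K|a_n|`: the contributions of the far-away zeros are
bounded by `∑ 4N/(K^{4n−3} − 1)`. -/
theorem log_derivative_sum_estimates (a : ℕ → ℂ) (K : ℝ) (N : ℕ) (hK : 1 < K)
    (h1 : ∀ n, 1 < ‖a n‖)
    (hmono : ∀ n, ‖a n‖ ≤ ‖a (n + 1)‖)
    (htend : Tendsto (fun n => ‖a n‖) atTop atTop)
    (hgrow : ∀ n, K * ‖a n‖ ≤ ‖a (n + N)‖)
    (r : ℝ) (hr : 1 < r) (z : ℂ)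
    (hz1 : r / K < ‖z‖) (hz2 : ‖z‖ ≤ K * r) :
    ‖∑' j : ℕ, if K ^ 2 * r < ‖a j‖ then z / (z - a j) else 0‖
      ≤ ∑' n : ℕ, 4 * (N : ℝ) / (K ^ (4 * n + 1) - 1) ∧
    ‖(∑' j : ℕ, if ‖a j‖ ≤ r / K ^ 2 then z / (z - a j) else 0) -
        (Nat.card {j : ℕ // ‖a j‖ ≤ r / K ^ 2} : ℂ)‖
      ≤ ∑' n : ℕ, 4 * (N : ℝ) / (K ^ (4 * n + 1) - 1) := by
  classical
  have hK0 : (0 : ℝ) < K := lt_trans one_pos hK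
  have hr0 : (0 : ℝ) < r := lt_trans one_pos hr
  have hz0 : 0 < ‖z‖ := lt_trans (by positivity) hz1
  have mono : Monotone (fun n => ‖(a n)‖) := monotone_nat_of_le_succ hmono
  have growM : ∀ i j : ℕ, i + N ≤ j → K * ‖(a i)‖ ≤ ‖(a j)‖ :=
    fun i j h => (hgrow i).trans (mono h)
  -- the bounding sequence
  set c : ℕ → ℝ := fun n => 1 / (K ^ (4 * n + 1) - 1) with hc
  have hKn : ∀ n : ℕ, (1 : ℝ) < K ^ (4 * n + 1) := fun n =>
    one_lt_pow₀ hK (by omega)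
  have hKn' : ∀ n : ℕ, (0 : ℝ) < K ^ (4 * n + 1) - 1 := fun n => by
    have := hKn n; linarith
  have hcpos : ∀ n, 0 < c n := fun n => div_pos one_pos (hKn' n)
  -- summability of the RHS
  have hsum : Summable (fun n : ℕ => 4 * (N : ℝ) / (K ^ (4 * n + 1) - 1)) := by
    apply Summable.of_nonneg_of_le (fun n => div_nonneg (by positivity) (hKn' n).le)
      (f := fun n : ℕ => (4 * (N : ℝ) / (K - 1)) * ((1 / K) ^ 4) ^ n)
    · intro n
      have h1K : K ^ (4 * n) * (K - 1) ≤ K ^ (4 * n + 1) - 1 := by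
        have h2 : (1 : ℝ) ≤ K ^ (4 * n) := one_le_pow₀ hK.le
        have h3 : K ^ (4 * n + 1) = K ^ (4 * n) * K := pow_succ K (4 * n)
        nlinarith
      have hpowpos : (0 : ℝ) < K ^ (4 * n) * (K - 1) :=
        mul_pos (pow_pos hK0 _) (by linarith)
      have := div_le_div_of_nonneg_left (by positivity : (0:ℝ) ≤ 4 * (N:ℝ)) hpowpos h1K
      refine this.trans (le_of_eq ?_)
      have e1 : ((1 / K) ^ 4) ^ n = (K ^ (4 * n))⁻¹ := by
        rw [← pow_mul, one_div, inv_pow, mul_comm]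
      rw [e1, ← div_eq_mul_inv, div_div, mul_comm (K - 1)]
    · exact (summable_geometric_of_lt_one (by positivity)
        (by rw [one_div]; exact pow_lt_one₀ (by positivity) (inv_lt_one_of_one_lt₀ hK) (by norm_num))).mul_left _
  have hRHS : ∀ n : ℕ, 4 * (N : ℝ) / (K ^ (4 * n + 1) - 1) = 4 * N * c n := fun n => by
    simp only [hc]; rw [mul_one_div]
  -- basic annulus counting: at most N points with s < |a j| ≤ K * s
  have base : ∀ (s : ℝ) (F : Finset ℕ),
      (∀ j ∈ F, s < ‖(a j)‖ ∧ ‖(a j)‖ ≤ K * s) → F.card ≤ N := by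
    intro s F hF
    by_contra hcon
    push_neg at hcon
    have hne : F.Nonempty := Finset.card_pos.mp (by omega)
    have hsub : F ⊆ Finset.Icc (F.min' hne) (F.max' hne) :=
      fun j hj => Finset.mem_Icc.mpr ⟨F.min'_le j hj, F.le_max' j hj⟩
    have hcard := Finset.card_le_card hsub
    rw [Nat.card_Icc] at hcard
    have hle : F.min' hne + N ≤ F.max' hne := by omega
    have h2 := growM _ _ hle
    have h3 := (hF _ (F.min'_mem hne)).1
    have h4 := (hF _ (F.max'_mem hne)).2
    nlinarith [mul_lt_mul_of_pos_left h3 hK0]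
  -- annulus of ratio K^4: at most 4N points
  have ann4 : ∀ (s : ℝ) (F : Finset ℕ),
      (∀ j ∈ F, s < ‖(a j)‖ ∧ ‖(a j)‖ ≤ K ^ 4 * s) → F.card ≤ 4 * N := by
    intro s F hF
    set p1 : ℕ → Prop := fun j => ‖(a j)‖ ≤ K * s with hp1
    set p2 : ℕ → Prop := fun j => K * s < ‖(a j)‖ ∧ ‖(a j)‖ ≤ K^2 * s with hp2
    set p3 : ℕ → Prop := fun j => K^2 * s < ‖(a j)‖ ∧ ‖(a j)‖ ≤ K^3 * s with hp3
    set p4 : ℕ → Prop := fun j => K^3 * s < ‖(a j)‖ with hp4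
    have hsub : F ⊆ (F.filter p1 ∪ F.filter p2) ∪ (F.filter p3 ∪ F.filter p4) := by
      intro j hj
      simp only [Finset.mem_union, Finset.mem_filter, hp1, hp2, hp3, hp4]
      rcases le_or_gt (‖(a j)‖) (K * s) with h | h
      · tauto
      rcases le_or_gt (‖(a j)‖) (K^2 * s) with h2 | h2
      · tauto
      rcases le_or_gt (‖(a j)‖) (K^3 * s) with h3 | h3 <;> tauto
    have c1 : (F.filter p1).card ≤ N := by
      apply base s
      intro j hj
      simp only [Finset.mem_filter, hp1] at hj
      exact ⟨(hF j hj.1).1, hj.2⟩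
    have c2 : (F.filter p2).card ≤ N := by
      apply base (K * s)
      intro j hj
      simp only [Finset.mem_filter, hp2] at hj
      exact ⟨hj.2.1, by nlinarith [hj.2.2]⟩
    have c3 : (F.filter p3).card ≤ N := by
      apply base (K^2 * s)
      intro j hj
      simp only [Finset.mem_filter, hp3] at hj
      exact ⟨hj.2.1, by nlinarith [hj.2.2]⟩
    have c4 : (F.filter p4).card ≤ N := by
      apply base (K^3 * s)
      intro j hj
      simp only [Finset.mem_filter, hp4] at hj
      exact ⟨hj.2, by nlinarith [(hF j hj.1).2]⟩
    calc F.card ≤ ((F.filter p1 ∪ F.filter p2) ∪ (F.filter p3 ∪ F.filter p4)).card :=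
          Finset.card_le_card hsub
      _ ≤ (F.filter p1 ∪ F.filter p2).card + (F.filter p3 ∪ F.filter p4).card :=
          Finset.card_union_le _ _
      _ ≤ ((F.filter p1).card + (F.filter p2).card) + ((F.filter p3).card + (F.filter p4).card) :=
          add_le_add (Finset.card_union_le _ _) (Finset.card_union_le _ _)
      _ ≤ (N + N) + (N + N) := by omega
      _ = 4 * N := by ring
  -- abstract fiberwise summation bound
  have key : ∀ (F : Finset ℕ) (f : ℕ → ℝ) (ν : ℕ → ℕ),
      (∀ j ∈ F, f j ≤ c (ν j)) →
      (∀ n, (F.filter (fun j => ν j = n)).card ≤ 4 * N) →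
      ∑ j ∈ F, f j ≤ ∑' n : ℕ, 4 * (N : ℝ) / (K ^ (4 * n + 1) - 1) := by
    intro F f ν hb hcard
    have h1 : ∑ j ∈ F, f j ≤ ∑ j ∈ F, c (ν j) := Finset.sum_le_sum hb
    have h2 : ∑ j ∈ F, c (ν j) =
        ∑ n ∈ F.image ν, ∑ j ∈ F.filter (fun j => ν j = n), c (ν j) :=
      (Finset.sum_fiberwise_of_maps_to (fun j hj => Finset.mem_image_of_mem ν hj) _).symm
    have h3 : ∀ n ∈ F.image ν,
        ∑ j ∈ F.filter (fun j => ν j = n), c (ν j) ≤ 4 * (N : ℝ) * c n := by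
      intro n _
      have hle : ∀ j ∈ F.filter (fun j => ν j = n), c (ν j) ≤ c n := by
        intro j hj
        rw [(Finset.mem_filter.mp hj).2]
      calc ∑ j ∈ F.filter (fun j => ν j = n), c (ν j)
          ≤ (F.filter (fun j => ν j = n)).card • c n := Finset.sum_le_card_nsmul _ _ _ hle
        _ = ((F.filter (fun j => ν j = n)).card : ℝ) * c n := nsmul_eq_mul _ _
        _ ≤ 4 * (N : ℝ) * c n := by
            apply mul_le_mul_of_nonneg_right _ (hcpos n).le
            exact_mod_cast hcard n
    calc ∑ j ∈ F, f j ≤ ∑ n ∈ F.image ν, ∑ j ∈ F.filter (fun j => ν j = n), c (ν j) :=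
          h1.trans h2.le
      _ ≤ ∑ n ∈ F.image ν, 4 * (N : ℝ) * c n := Finset.sum_le_sum h3
      _ = ∑ n ∈ F.image ν, 4 * (N : ℝ) / (K ^ (4 * n + 1) - 1) := by
          exact Finset.sum_congr rfl fun n _ => (hRHS n).symm
      _ ≤ ∑' n : ℕ, 4 * (N : ℝ) / (K ^ (4 * n + 1) - 1) :=
          Summable.sum_le_tsum _ (fun n _ => div_nonneg (by positivity) (hKn' n).le) hsum
  constructor
  · -- Part (i): far zeros
    set g : ℕ → ℂ := fun j => if K ^ 2 * r < ‖(a j)‖ then z / (z - a j) else 0 with hg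
    have hex1 : ∀ j : ℕ, ∃ n : ℕ, ‖(a j)‖ ≤ K ^ (4 * n + 6) * r := by
      intro j
      obtain ⟨n, hn⟩ := pow_unbounded_of_one_lt (‖(a j)‖) hK
      refine ⟨n, hn.le.trans ?_⟩
      calc K ^ n ≤ K ^ (4 * n + 6) := pow_le_pow_right₀ hK.le (by omega)
        _ ≤ K ^ (4 * n + 6) * r := le_mul_of_one_le_right (by positivity) hr.le
    set ν : ℕ → ℕ := fun j => Nat.find (hex1 j) with hν
    have hν2 : ∀ j, ‖(a j)‖ ≤ K ^ (4 * ν j + 6) * r := fun j => Nat.find_spec (hex1 j)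
    have hν1 : ∀ j, K ^ 2 * r < ‖(a j)‖ → K ^ (4 * ν j + 2) * r < ‖(a j)‖ := by
      intro j hfar
      rcases Nat.eq_zero_or_pos (ν j) with h0 | hpos
      · rw [h0]; norm_num; exact hfar
      · have hmin := Nat.find_min (hex1 j) (show ν j - 1 < ν j by omega)
        push_neg at hmin
        have heq : 4 * (ν j - 1) + 6 = 4 * ν j + 2 := by omega
        rwa [heq] at hmin
    -- term bound
    have hterm : ∀ j, K ^ 2 * r < ‖(a j)‖ →
        ‖(z / (z - a j))‖ ≤ c (ν j) := by
      intro j hfar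
      have hbig : K ^ (4 * ν j + 1) * ‖z‖ < ‖(a j)‖ := by
        calc K ^ (4 * ν j + 1) * ‖z‖ ≤ K ^ (4 * ν j + 1) * (K * r) := by
              apply mul_le_mul_of_nonneg_left hz2 (by positivity)
          _ = K ^ (4 * ν j + 2) * r := by
              rw [show 4 * ν j + 2 = (4 * ν j + 1) + 1 by omega, pow_succ]; ring
          _ < ‖(a j)‖ := hν1 j hfar
      have hsubabs : (K ^ (4 * ν j + 1) - 1) * ‖z‖ < ‖(z - a j)‖ := by
        have h5 : ‖(a j)‖ - ‖z‖ ≤ ‖(z - a j)‖ := by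
          rw [norm_sub_rev]
          exact norm_sub_norm_le _ _
        nlinarith
      have hpos : (0 : ℝ) < (K ^ (4 * ν j + 1) - 1) * ‖z‖ :=
        mul_pos (hKn' (ν j)) hz0
      rw [norm_div]
      calc ‖z‖ / ‖(z - a j)‖
          ≤ ‖z‖ / ((K ^ (4 * ν j + 1) - 1) * ‖z‖) :=
            div_le_div_of_nonneg_left hz0.le hpos hsubabs.le
        _ = 1 / (K ^ (4 * ν j + 1) - 1) := by
            rw [mul_comm, div_mul_eq_div_div, div_self hz0.ne']
        _ = c (ν j) := rfl
    -- fibers lie in annuli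
    have hfib : ∀ (F : Finset ℕ) (n : ℕ),
        (∀ j ∈ F, K ^ 2 * r < ‖(a j)‖ ∧ ν j = n) → F.card ≤ 4 * N := by
      intro F n hF
      apply ann4 (K ^ (4 * n + 2) * r)
      intro j hj
      obtain ⟨hfar, hn⟩ := hF j hj
      constructor
      · rw [← hn]; exact hν1 j hfar
      · have := hν2 j
        rw [hn] at this
        refine this.trans (le_of_eq ?_)
        rw [show 4 * n + 6 = 4 + (4 * n + 2) by omega, pow_add]
        ring
    -- partial sums of norms are bounded
    have bound1 : ∀ F : Finset ℕ,
        ∑ j ∈ F, ‖g j‖ ≤ ∑' n : ℕ, 4 * (N : ℝ) / (K ^ (4 * n + 1) - 1) := by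
      intro F
      have hzero : ∀ j ∈ F, ‖g j‖ ≠ 0 → K ^ 2 * r < ‖(a j)‖ := by
        intro j _ hne
        by_contra hp
        simp [hg, if_neg hp] at hne
      rw [← Finset.sum_filter_of_ne hzero]
      apply key _ _ ν
      · intro j hj
        have hfar := (Finset.mem_filter.mp hj).2
        rw [hg]
        simp only [if_pos hfar]
        exact hterm j hfar
      · intro n
        apply hfib
        intro j hj
        simp only [Finset.mem_filter] at hj
        exact ⟨hj.1.2, hj.2⟩
    have hsummable : Summable (fun j => ‖g j‖) :=
      summable_of_sum_le (fun j => norm_nonneg _) bound1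
    exact (norm_tsum_le_tsum_norm hsummable).trans
      (Summable.tsum_le_of_sum_le hsummable bound1)
  · -- Part (ii): near zeros
    have hfin : {j : ℕ | ‖(a j)‖ ≤ r / K ^ 2}.Finite := by
      obtain ⟨M, hM⟩ := eventually_atTop.mp (htend.eventually_gt_atTop (r / K ^ 2))
      apply Set.Finite.subset (Set.finite_Iio M)
      intro j hj
      simp only [Set.mem_setOf_eq] at hj
      simp only [Set.mem_Iio]
      by_contra h
      exact absurd (hM j (by omega)) (not_lt.mpr hj)
    set F₂ : Finset ℕ := hfin.toFinset with hF₂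
    have hmem : ∀ j, j ∈ F₂ ↔ ‖(a j)‖ ≤ r / K ^ 2 := fun j => by
      simp [hF₂, Set.Finite.mem_toFinset]
    -- the tsum equals the finite sum
    have htsum : (∑' j : ℕ, if ‖(a j)‖ ≤ r / K ^ 2 then z / (z - a j) else 0) =
        ∑ j ∈ F₂, z / (z - a j) := by
      rw [tsum_eq_sum (s := F₂) (fun j hj => if_neg (fun hp => hj ((hmem j).mpr hp)))]
      exact Finset.sum_congr rfl fun j hj => if_pos ((hmem j).mp hj)
    -- the cardinality equals the finite sum of ones
    have hcardeq : (Nat.card {j : ℕ // ‖(a j)‖ ≤ r / K ^ 2} : ℂ) =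
        ∑ j ∈ F₂, (1 : ℂ) := by
      have : Nat.card {j : ℕ // ‖(a j)‖ ≤ r / K ^ 2} = F₂.card := by
        have h0 : Nat.card {j : ℕ // ‖(a j)‖ ≤ r / K ^ 2} =
            Set.ncard {j : ℕ | ‖(a j)‖ ≤ r / K ^ 2} :=
          Nat.card_coe_set_eq _
        rw [h0, Set.ncard_eq_toFinset_card _ hfin]
      rw [this, Finset.sum_const, nsmul_eq_mul, mul_one]
    -- nonvanishing of z - a j on the near set
    have hsmall : ∀ j ∈ F₂, ‖(a j)‖ < ‖z‖ := by
      intro j hj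
      have h1' := (hmem j).mp hj
      have h2 : r / K ^ 2 < r / K := by
        rw [pow_two, ← div_div]
        exact div_lt_self (by positivity) hK
      linarith
    have hne : ∀ j ∈ F₂, z - a j ≠ 0 := by
      intro j hj
      intro h
      have : z = a j := by linear_combination h
      rw [this] at hsmall
      exact absurd (hsmall j hj) (lt_irrefl _)
    -- rewrite the difference
    have hdiff : (∑ j ∈ F₂, z / (z - a j)) - ∑ j ∈ F₂, (1 : ℂ) =
        ∑ j ∈ F₂, a j / (z - a j) := by
      rw [← Finset.sum_sub_distrib]
      apply Finset.sum_congr rfl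
      intro j hj
      rw [div_sub_one (hne j hj), sub_sub_cancel]
    rw [htsum, hcardeq, hdiff]
    -- the index function μ
    have hex2 : ∀ j : ℕ, ∃ n : ℕ, r / K ^ (4 * n + 6) < ‖(a j)‖ := by
      intro j
      obtain ⟨n, hn⟩ := pow_unbounded_of_one_lt r hK
      refine ⟨n, lt_trans ?_ (h1 j)⟩
      rw [div_lt_one (by positivity)]
      exact hn.trans_le (pow_le_pow_right₀ hK.le (by omega))
    set μ : ℕ → ℕ := fun j => Nat.find (hex2 j) with hμ
    have hμ1 : ∀ j, r / K ^ (4 * μ j + 6) < ‖(a j)‖ := fun j => Nat.find_spec (hex2 j)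
    have hμ2 : ∀ j, ‖(a j)‖ ≤ r / K ^ 2 → ‖(a j)‖ ≤ r / K ^ (4 * μ j + 2) := by
      intro j hnear
      rcases Nat.eq_zero_or_pos (μ j) with h0 | hpos
      · rw [h0]; norm_num; exact hnear
      · have hmin := Nat.find_min (hex2 j) (show μ j - 1 < μ j by omega)
        push_neg at hmin
        have heq : 4 * (μ j - 1) + 6 = 4 * μ j + 2 := by omega
        rwa [heq] at hmin
    -- term bound
    have hterm2 : ∀ j ∈ F₂, ‖(a j / (z - a j))‖ ≤ c (μ j) := by
      intro j hj
      have hnear := (hmem j).mp hj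
      have haj : 0 < ‖(a j)‖ := lt_trans one_pos (h1 j)
      have hbig : K ^ (4 * μ j + 1) * ‖(a j)‖ < ‖z‖ := by
        calc K ^ (4 * μ j + 1) * ‖(a j)‖
            ≤ K ^ (4 * μ j + 1) * (r / K ^ (4 * μ j + 2)) := by
              apply mul_le_mul_of_nonneg_left (hμ2 j hnear) (by positivity)
          _ = r / K := by
              rw [show 4 * μ j + 2 = (4 * μ j + 1) + 1 by omega, pow_succ]
              field_simp
              ring
          _ < ‖z‖ := hz1
      have hsubabs : (K ^ (4 * μ j + 1) - 1) * ‖(a j)‖ < ‖(z - a j)‖ := by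
        have h5 : ‖z‖ - ‖(a j)‖ ≤ ‖(z - a j)‖ := by
          exact norm_sub_norm_le _ _
        nlinarith
      have hpos : (0 : ℝ) < (K ^ (4 * μ j + 1) - 1) * ‖(a j)‖ :=
        mul_pos (hKn' (μ j)) haj
      rw [norm_div]
      calc ‖(a j)‖ / ‖(z - a j)‖
          ≤ ‖(a j)‖ / ((K ^ (4 * μ j + 1) - 1) * ‖(a j)‖) :=
            div_le_div_of_nonneg_left haj.le hpos hsubabs.le
        _ = 1 / (K ^ (4 * μ j + 1) - 1) := by
            rw [mul_comm, div_mul_eq_div_div, div_self haj.ne']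
        _ = c (μ j) := rfl
    -- conclude via key
    calc ‖(∑ j ∈ F₂, a j / (z - a j))‖
        ≤ ∑ j ∈ F₂, ‖(a j / (z - a j))‖ := by
          exact (norm_sum_le _ _).trans (le_of_eq (Finset.sum_congr rfl
            fun j _ => rfl))
      _ ≤ ∑' n : ℕ, 4 * (N : ℝ) / (K ^ (4 * n + 1) - 1) := by
          apply key _ _ μ hterm2
          intro n
          apply ann4 (r / K ^ (4 * n + 6))
          intro j hj
          simp only [Finset.mem_filter] at hj
          obtain ⟨hjF, hn⟩ := hj
          constructor
          · rw [← hn]; exact hμ1 j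
          · have := hμ2 j ((hmem j).mp hjF)
            rw [hn] at this
            refine this.trans (le_of_eq ?_)
            rw [show 4 * n + 6 = 4 + (4 * n + 2) by omega, pow_add]
            field_simp
            ring
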